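/- Let (M_k)_{k≥0} be nonnegative reals with M_0 = 1 satisfying, for constants η ∈ (0,1), α ∈ (0,1), τ > 0, the recursion (1-η)(1-α^k) M_k^k ≥ η Σ_{j=1}^k C(k,j) τ^j M_{k-j}^{k-j} for all k ≥ 1. Then there exists C > 0 such that M_k ≥ Ck for all k ≥ 1; in particular the sequence M_k grows at least linearly in k and cannot satisfy M_k = O(√k). -/

import Mathlib

lemma succ_pow_le_three_mul (n : ℕ) (hn : 1 ≤ n) :
    ((n : ℝ) + 1) ^ n ≤ 3 * (n : ℝ) ^ n := by
  have hn0 : (0 : ℝ) < n := by exact_mod_cast hn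
  have h1 : (1 / (n : ℝ) + 1) ≤ Real.exp (1 / n) := Real.add_one_le_exp _
  have h2 : (1 / (n : ℝ) + 1) ^ n ≤ Real.exp (1 / n) ^ n := by
    apply pow_le_pow_left₀ (by positivity) h1
  have h3 : Real.exp (1 / (n : ℝ)) ^ n = Real.exp 1 := by
    rw [← Real.exp_nat_mul, mul_one_div, div_self hn0.ne']
  have h4 : Real.exp 1 ≤ 3 := by
    have := Real.exp_one_lt_d9
    norm_num at this ⊢
    linarith
  have key : ((n : ℝ) + 1) ^ n = (n : ℝ) ^ n * (1 / (n : ℝ) + 1) ^ n := by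
    rw [← mul_pow]
    congr 1
    field_simp
    ring
  rw [key]
  calc (n : ℝ) ^ n * (1 / (n : ℝ) + 1) ^ n ≤ (n : ℝ) ^ n * 3 := by
        apply mul_le_mul_of_nonneg_left _ (by positivity)
        calc (1 / (n : ℝ) + 1) ^ n ≤ Real.exp (1 / n) ^ n := h2
          _ = Real.exp 1 := h3
          _ ≤ 3 := h4
    _ = 3 * (n : ℝ) ^ n := by ring

theorem moments_grow_linearly
    (M : ℕ → ℝ) (hMnn : ∀ k, 0 ≤ M k) (hM0 : M 0 = 1)
    (η α τ : ℝ) (hη0 : 0 < η) (hη1 : η < 1) (hα0 : 0 < α) (hα1 : α < 1)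
    (hτ : 0 < τ)
    (hrec : ∀ k : ℕ, 1 ≤ k →
      η * ∑ j ∈ Finset.Icc 1 k, (k.choose j : ℝ) * τ ^ j * M (k - j) ^ (k - j) ≤
        (1 - η) * (1 - α ^ k) * M k ^ k) :
    ∃ C : ℝ, 0 < C ∧ ∀ k : ℕ, 1 ≤ k → C * k ≤ M k := by
  have h1η : (0 : ℝ) < 1 - η := by linarith
  set D : ℝ := η * τ / (1 - η) with hD
  have hDpos : 0 < D := by positivity
  -- M 1 is positive
  have hM1 : 0 < M 1 := by
    have h := hrec 1 le_rfl
    simp [hM0] at h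
    by_contra hcon
    push_neg at hcon
    have h1α : (0:ℝ) < 1 - α := by linarith
    nlinarith [mul_pos hη0 hτ, mul_nonneg (mul_pos h1η h1α).le (neg_nonneg.mpr hcon)]
  set C : ℝ := min (M 1) (D / 3) with hC
  have hCpos : 0 < C := lt_min hM1 (by positivity)
  refine ⟨C, hCpos, ?_⟩
  -- main step: D * (k+1) * M k ^ k ≤ M (k+1) ^ (k+1)
  have step : ∀ k : ℕ, 1 ≤ k → D * ((k : ℝ) + 1) * M k ^ k ≤ M (k + 1) ^ (k + 1) := by
    intro k hk
    have h := hrec (k + 1) (by omega)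
    have hmem : 1 ∈ Finset.Icc 1 (k + 1) := by simp
    have hsum : ((k + 1).choose 1 : ℝ) * τ ^ 1 * M (k + 1 - 1) ^ (k + 1 - 1) ≤
        ∑ j ∈ Finset.Icc 1 (k + 1), ((k + 1).choose j : ℝ) * τ ^ j * M (k + 1 - j) ^ (k + 1 - j) := by
      apply Finset.single_le_sum (f := fun j => ((k + 1).choose j : ℝ) * τ ^ j * M (k + 1 - j) ^ (k + 1 - j)) _ hmem
      intro j _
      have := hMnn (k + 1 - j)
      positivity
    have hterm : ((k + 1).choose 1 : ℝ) * τ ^ 1 * M (k + 1 - 1) ^ (k + 1 - 1) =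
        ((k : ℝ) + 1) * τ * M k ^ k := by
      simp [Nat.choose_one_right]
    rw [hterm] at hsum
    have hαk : (0 : ℝ) < α ^ (k + 1) := pow_pos hα0 _
    have hαk1 : α ^ (k + 1) < 1 := pow_lt_one₀ hα0.le hα1 (by omega)
    have hMk1 : 0 ≤ M (k + 1) ^ (k + 1) := pow_nonneg (hMnn _) _
    have h2 : η * (((k : ℝ) + 1) * τ * M k ^ k) ≤ (1 - η) * M (k + 1) ^ (k + 1) := by
      have hmono : η * (((k : ℝ) + 1) * τ * M k ^ k) ≤
          η * ∑ j ∈ Finset.Icc 1 (k + 1), ((k + 1).choose j : ℝ) * τ ^ j * M (k + 1 - j) ^ (k + 1 - j) :=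
        mul_le_mul_of_nonneg_left hsum hη0.le
      nlinarith [mul_nonneg (mul_pos h1η hαk).le hMk1]
    rw [hD, div_mul_eq_mul_div, div_mul_eq_mul_div, div_le_iff₀ h1η]
    nlinarith
  intro k hk
  induction k, hk using Nat.le_induction with
  | base => simp only [Nat.cast_one, mul_one]; exact min_le_left _ _
  | succ k hk ih =>
    have hk0 : (0 : ℝ) < k := by exact_mod_cast hk
    have hMkk : (C * k) ^ k ≤ M k ^ k := pow_le_pow_left₀ (by positivity) ih k
    have hstep := step k hk
    have hkey : (C * ((k : ℝ) + 1)) ^ (k + 1) ≤ D * ((k : ℝ) + 1) * (C * k) ^ k := by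
      have hexp : (C * ((k : ℝ) + 1)) ^ (k + 1) = (C * ((k : ℝ) + 1) ^ k) * (C ^ k * ((k : ℝ) + 1)) := by
        rw [mul_pow]
        ring
      rw [hexp]
      have h1 : C * ((k : ℝ) + 1) ^ k ≤ D * (k : ℝ) ^ k := by
        calc C * ((k : ℝ) + 1) ^ k ≤ (D / 3) * (3 * (k : ℝ) ^ k) := by
              apply mul_le_mul (min_le_right _ _) (succ_pow_le_three_mul k hk) (by positivity) (by positivity)
          _ = D * (k : ℝ) ^ k := by ring
      calc (C * ((k : ℝ) + 1) ^ k) * (C ^ k * ((k : ℝ) + 1))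
          ≤ (D * (k : ℝ) ^ k) * (C ^ k * ((k : ℝ) + 1)) := by
            apply mul_le_mul_of_nonneg_right h1 (by positivity)
        _ = D * ((k : ℝ) + 1) * (C * k) ^ k := by rw [mul_pow]; ring
    have hfinal : (C * ((k : ℝ) + 1)) ^ (k + 1) ≤ M (k + 1) ^ (k + 1) := by
      calc (C * ((k : ℝ) + 1)) ^ (k + 1) ≤ D * ((k : ℝ) + 1) * (C * k) ^ k := hkey
        _ ≤ D * ((k : ℝ) + 1) * M k ^ k := by
            apply mul_le_mul_of_nonneg_left hMkk (by positivity)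
        _ ≤ M (k + 1) ^ (k + 1) := hstep
    have := le_of_pow_le_pow_left₀ (Nat.succ_ne_zero k) (hMnn (k + 1)) hfinal
    push_cast
    linarith
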